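/- arXiv:1606.05101 — 2 statements merged into one kernel-verified Lean document; each statement's English description precedes it below -/
import Mathlib

section
/- Suppose $H, \phi, \rho, a$ are continuous on $[0,\infty)$ with $H(t)^2 = \frac{1}{3}(\rho(t) + \phi(t)) - k/a(t)^2$ where $k \in \{0,-1\}$, $\rho(t) \ge 0$, $\phi$ nonincreasing with $\lim_{t\to\infty} \phi(t) = \phi_\infty > 0$, and $H(0) > 0$ with $H$ never vanishing. Then $H(t) \ge \sqrt{\phi_\infty/3}$ for all $t \ge 0$, and consequently $a(t) \ge a(0) e^{\sqrt{\phi_\infty/3}\, t}$ where $\dot a = H a$ and $a(0) > 0$. -/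
open Set Filter

/-- Friedmann constraint with `k ≤ 0`, `ρ ≥ 0`, `φ` nonincreasing with
positive limit `φinf`, and `H` continuous, never vanishing, positive at `0`:
then `H(t) ≥ √(φinf/3)` and `a(t) ≥ a(0) e^{√(φinf/3) t}`. -/
theorem asymptotic_lower_bounds (k : ℝ) (hk : k = 0 ∨ k = -1)
    (H φ ρ a : ℝ → ℝ) (φinf : ℝ) (hφinf : 0 < φinf)
    (hH_cont : ContinuousOn H (Set.Ici (0 : ℝ)))
    (hφ_cont : ContinuousOn φ (Set.Ici (0 : ℝ)))
    (hρ_cont : ContinuousOn ρ (Set.Ici (0 : ℝ)))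
    (ha_cont : ContinuousOn a (Set.Ici (0 : ℝ)))
    (ha_pos : ∀ t : ℝ, 0 ≤ t → 0 < a t)
    (hconstraint : ∀ t : ℝ, 0 ≤ t →
      H t ^ 2 = 1 / 3 * (ρ t + φ t) - k / a t ^ 2)
    (hρ_nonneg : ∀ t : ℝ, 0 ≤ t → 0 ≤ ρ t)
    (hφ_mono : AntitoneOn φ (Set.Ici (0 : ℝ)))
    (hφ_lim : Tendsto φ atTop (nhds φinf))
    (hH0 : 0 < H 0)
    (hH_ne : ∀ t : ℝ, 0 ≤ t → H t ≠ 0)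
    (ha0 : 0 < a 0)
    (ha : ∀ t : ℝ, 0 ≤ t → HasDerivAt a (H t * a t) t) :
    (∀ t : ℝ, 0 ≤ t → H t ≥ Real.sqrt (φinf / 3)) ∧
      ∀ t : ℝ, 0 ≤ t → a t ≥ a 0 * Real.exp (Real.sqrt (φinf / 3) * t) := by
  -- φ t ≥ φinf
  have hφ_ge : ∀ t : ℝ, 0 ≤ t → φinf ≤ φ t := by
    intro t ht
    refine le_of_tendsto hφ_lim ?_
    filter_upwards [eventually_ge_atTop t] with s hs
    exact hφ_mono ht (le_trans ht hs) hs
  -- H t ^ 2 ≥ φinf / 3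
  have hsq : ∀ t : ℝ, 0 ≤ t → φinf / 3 ≤ H t ^ 2 := by
    intro t ht
    have hk' : k ≤ 0 := by rcases hk with h | h <;> simp [h]
    have ha2 : (0:ℝ) < a t ^ 2 := pow_pos (ha_pos t ht) 2
    have h1 : -k / a t ^ 2 ≥ 0 := div_nonneg (by linarith) ha2.le
    have := hconstraint t ht
    have hρ := hρ_nonneg t ht
    have hφ := hφ_ge t ht
    rw [neg_div] at h1
    linarith
  -- H positive everywhere
  have hHpos : ∀ t : ℝ, 0 ≤ t → 0 < H t := by
    intro t ht
    by_contra h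
    push_neg at h
    have hlt : H t < 0 := lt_of_le_of_ne h (hH_ne t ht)
    have hIcc : Set.Icc (0:ℝ) t ⊆ Set.Ici 0 := Icc_subset_Ici_self
    have := intermediate_value_Icc' ht (hH_cont.mono hIcc)
    have h0 : (0:ℝ) ∈ Set.Icc (H t) (H 0) := ⟨hlt.le, hH0.le⟩
    obtain ⟨s, hs, hs0⟩ := this h0
    exact hH_ne s hs.1 hs0
  set c := Real.sqrt (φinf / 3) with hc
  have hcpos : 0 < c := Real.sqrt_pos.mpr (by linarith)
  have hHge : ∀ t : ℝ, 0 ≤ t → c ≤ H t := by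
    intro t ht
    have := Real.sqrt_le_sqrt (hsq t ht)
    rwa [Real.sqrt_sq (hHpos t ht).le] at this
  refine ⟨fun t ht => hHge t ht, ?_⟩
  -- exponential lower bound
  set g : ℝ → ℝ := fun t => a t * Real.exp (-c * t) with hg
  have hgderiv : ∀ t : ℝ, 0 ≤ t →
      HasDerivAt g ((H t - c) * (a t * Real.exp (-c * t))) t := by
    intro t ht
    have h2 : HasDerivAt (fun s : ℝ => Real.exp (-c * s)) (Real.exp (-c * t) * (-c)) t := by
      have : HasDerivAt (fun s : ℝ => -c * s) (-c) t := by
        simpa using (hasDerivAt_id t).const_mul (-c)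
      exact this.exp
    have := (ha t ht).mul h2
    exact this.congr_deriv (by ring)
  have hgmono : MonotoneOn g (Set.Ici (0:ℝ)) := by
    apply monotoneOn_of_deriv_nonneg (convex_Ici 0)
    · exact ha_cont.mul (Real.continuous_exp.comp (continuous_const.mul continuous_id)).continuousOn
    · intro x hx
      rw [interior_Ici] at hx
      exact (hgderiv x hx.le).differentiableAt.differentiableWithinAt
    · intro x hx
      rw [interior_Ici] at hx
      rw [(hgderiv x hx.le).deriv]
      have h1 : 0 ≤ H x - c := sub_nonneg.mpr (hHge x hx.le)
      have h2 : 0 < a x * Real.exp (-c * x) :=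
        mul_pos (ha_pos x hx.le) (Real.exp_pos _)
      positivity
  intro t ht
  have := hgmono (self_mem_Ici) ht ht
  have hg0 : g 0 = a 0 := by simp [hg]
  have hgt : g t = a t * Real.exp (-c * t) := rfl
  rw [hg0, hgt] at this
  have hexp : (0:ℝ) < Real.exp (-c * t) := Real.exp_pos _
  have : a 0 * Real.exp (c * t) ≤ a t * Real.exp (-c * t) * Real.exp (c * t) :=
    mul_le_mul_of_nonneg_right this (Real.exp_pos _).le
  rw [mul_assoc, ← Real.exp_add] at this
  simpa using this
end

section
/- Let $\sigma, N, a_0, H_0 > 0$ and suppose $a(t) \le a_0 \exp(H_0 t + \frac{8}{27 N^2} t^2)$ for all $t \ge 0$, and $\dot\phi(t) = -3\sigma N a(t)^{-3}$. Then $\lim_{t\to\infty}\phi(t) \le \phi(0) - \frac{9\sigma N^2}{4 a_0^3}\sqrt{\frac{\pi}{2}}\, e^{x^2}\,\mathrm{Erfc}(x)$, where $x = \frac{9 H_0 N}{4\sqrt{2}}$ and $\mathrm{Erfc}$ is the complementary error function $\mathrm{Erfc}(x) = \frac{2}{\sqrt{\pi}}\int_x^\infty e^{-s^2} ds$. -/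
open Set Filter MeasureTheory

lemma my_shift (f : ℝ → ℝ) (c : ℝ) :
    ∫ t in Ioi (0:ℝ), f (t + c) = ∫ t in Ioi c, f t := by
  have h := (measurePreserving_add_right (volume : Measure ℝ) c).setIntegral_preimage_emb
      (measurableEmbedding_addRight c) f (Ioi c)
  simpa using h

lemma my_gauss (α s : ℝ) (hs : 0 < s) :
    ∫ t in Ioi (0:ℝ), Real.exp (-(s^2 * t^2 + α * t))
      = Real.exp ((α/(2*s))^2) * (s⁻¹ * ∫ u in Ioi (α/(2*s)), Real.exp (-u^2)) := by
  have hs' := hs.ne'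
  have h1 : ∀ t : ℝ, -(s^2 * t^2 + α * t)
      = (α/(2*s))^2 + -(s * (t + α/(2*s^2)))^2 := by
    intro t; field_simp; ring
  calc ∫ t in Ioi (0:ℝ), Real.exp (-(s^2 * t^2 + α * t))
      = ∫ t in Ioi (0:ℝ), Real.exp ((α/(2*s))^2) * Real.exp (-(s * (t + α/(2*s^2)))^2) := by
        refine setIntegral_congr_fun measurableSet_Ioi fun t _ => ?_
        rw [← Real.exp_add, ← h1]
    _ = Real.exp ((α/(2*s))^2) * ∫ t in Ioi (0:ℝ), Real.exp (-(s * (t + α/(2*s^2)))^2) := by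
        rw [integral_const_mul]
    _ = Real.exp ((α/(2*s))^2) * ∫ u in Ioi (α/(2*s^2)), Real.exp (-(s * u)^2) := by
        rw [my_shift (fun u => Real.exp (-(s*u)^2))]
    _ = Real.exp ((α/(2*s))^2) * (s⁻¹ * ∫ u in Ioi (α/(2*s)), Real.exp (-u^2)) := by
        rw [integral_comp_mul_left_Ioi (fun u => Real.exp (-u^2)) _ hs]
        have : s * (α/(2*s^2)) = α/(2*s) := by field_simp
        rw [this, smul_eq_mul]


/-- Complementary error function `Erfc(x) = (2/√π) ∫_x^∞ e^{-s²} ds`. -/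
noncomputable def Erfc (x : ℝ) : ℝ :=
  2 / Real.sqrt Real.pi * ∫ s in Set.Ioi x, Real.exp (-s ^ 2)

/-- Upper bound on the limit of `φ` in the closed case: if
`a(t) ≤ a₀ exp(H₀t + (8/27N²)t²)` and `φ' = -3σN a⁻³`, then
`lim φ ≤ φ(0) - (9σN²/4a₀³)√(π/2) e^{x²} Erfc(x)` with `x = 9H₀N/(4√2)`. -/
theorem phi_limit_erfc_bound (σ N a₀ H₀ : ℝ) (hσ : 0 < σ) (hN : 0 < N)
    (ha0 : 0 < a₀) (hH0 : 0 < H₀) (φ a : ℝ → ℝ)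
    (ha_pos : ∀ t : ℝ, 0 ≤ t → 0 < a t)
    (hφ : ∀ t : ℝ, 0 ≤ t → HasDerivAt φ (-(3 * σ * N) / a t ^ 3) t)
    (ha : ∀ t : ℝ, 0 ≤ t →
      a t ≤ a₀ * Real.exp (H₀ * t + 8 / (27 * N ^ 2) * t ^ 2)) :
    ∀ L : ℝ, Tendsto φ atTop (nhds L) →
      L ≤ φ 0 - 9 * σ * N ^ 2 / (4 * a₀ ^ 3) * Real.sqrt (Real.pi / 2) *
        Real.exp ((9 * H₀ * N / (4 * Real.sqrt 2)) ^ 2) *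
        Erfc (9 * H₀ * N / (4 * Real.sqrt 2)) := by
  intro L hL
  have hN' := hN.ne'
  have h2 : (0:ℝ) < Real.sqrt 2 := Real.sqrt_pos.mpr (by norm_num)
  have h2' := h2.ne'
  have h22 : Real.sqrt 2 * Real.sqrt 2 = 2 := Real.mul_self_sqrt (by norm_num)
  set s : ℝ := 2 * Real.sqrt 2 / (3 * N) with hs_def
  have hs : 0 < s := by positivity
  have hs2 : s ^ 2 = 8 / (9 * N ^ 2) := by
    rw [hs_def]; field_simp; nlinarith [h22]
  set α : ℝ := 3 * H₀ with hα_def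
  set x : ℝ := 9 * H₀ * N / (4 * Real.sqrt 2) with hx_def
  have hx : α / (2 * s) = x := by
    rw [hx_def, hα_def, hs_def]; field_simp; ring
  set b : ℝ → ℝ := fun t => -(3 * σ * N / a₀ ^ 3) * Real.exp (-(s^2 * t^2 + α * t)) with hb_def
  have hb_cont : Continuous b := by fun_prop
  -- the primitive of b
  set G : ℝ → ℝ := fun t => ∫ u in (0:ℝ)..t, b u with hG_def
  have hG : ∀ t : ℝ, HasDerivAt G (b t) t := by
    intro t
    exact intervalIntegral.integral_hasDerivAt_right (hb_cont.intervalIntegrable _ _)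
      (hb_cont.stronglyMeasurable.stronglyMeasurableAtFilter) hb_cont.continuousAt
  -- comparison: φ' ≤ b on [0,∞)
  have hcomp : ∀ t : ℝ, 0 ≤ t → -(3 * σ * N) / a t ^ 3 ≤ b t := by
    intro t ht
    have hB : (a₀ * Real.exp (H₀ * t + 8 / (27 * N ^ 2) * t ^ 2)) ^ 3
        = a₀ ^ 3 * Real.exp (s^2 * t^2 + α * t) := by
      rw [mul_pow, ← Real.exp_nat_mul]  -- maybe wrong name
      congr 1
      rw [hs2, hα_def]; field_simp; ring
    have hbt : b t = -(3 * σ * N) / (a₀ * Real.exp (H₀ * t + 8 / (27 * N ^ 2) * t ^ 2)) ^ 3 := by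
      show -(3 * σ * N / a₀ ^ 3) * Real.exp (-(s ^ 2 * t ^ 2 + α * t)) = _
      rw [hB, Real.exp_neg]
      field_simp
    rw [hbt, neg_div, neg_div, neg_le_neg_iff]
    have h1 : 0 < a t ^ 3 := pow_pos (ha_pos t ht) 3
    gcongr
    · exact (ha_pos t ht).le
    · exact ha t ht
  -- ψ = φ - G is antitone on [0,∞)
  have hψ : AntitoneOn (fun t => φ t - G t) (Ici 0) := by
    apply antitoneOn_of_deriv_nonpos (convex_Ici 0)
    · intro t ht
      exact ((hφ t ht).continuousAt.continuousWithinAt).sub (hG t).continuousAt.continuousWithinAt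
    · rw [interior_Ici]
      intro t ht
      exact (((hφ t (le_of_lt ht)).sub (hG t)).differentiableAt).differentiableWithinAt
    · rw [interior_Ici]
      intro t ht
      rw [show (fun t => φ t - G t) = φ - G from rfl, ((hφ t (le_of_lt ht)).sub (hG t)).deriv]
      have := hcomp t (le_of_lt ht)
      linarith
  have hφG : ∀ t : ℝ, 0 ≤ t → φ t ≤ φ 0 + G t := by
    intro t ht
    have hG0 : G 0 = 0 := by simp [hG_def]
    have h : φ t - G t ≤ φ 0 - G 0 := hψ self_mem_Ici ht ht
    rw [hG0] at h
    linarith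
  -- integrability
  have hint : IntegrableOn (fun t => Real.exp (-(s^2 * t^2 + α * t))) (Ioi (0:ℝ)) := by
    have hmaj : IntegrableOn (fun t => Real.exp (-α * t)) (Ioi (0:ℝ)) :=
      exp_neg_integrableOn_Ioi 0 (by rw [hα_def]; positivity)
    refine Integrable.mono' hmaj
      ((by fun_prop : Continuous fun t : ℝ => Real.exp (-(s^2*t^2 + α*t))).aestronglyMeasurable) ?_
    filter_upwards [ae_restrict_mem measurableSet_Ioi] with t ht
    rw [Real.norm_eq_abs, abs_of_pos (Real.exp_pos _)]
    apply Real.exp_le_exp.mpr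
    have : 0 ≤ s^2 * t^2 := by positivity
    linarith
  have hbint : IntegrableOn b (Ioi (0:ℝ)) := by
    exact (hint.const_mul _)
  have hGlim : Tendsto G atTop (nhds (∫ u in Ioi (0:ℝ), b u)) :=
    intervalIntegral_tendsto_integral_Ioi 0 hbint tendsto_id
  have hLle : L ≤ φ 0 + ∫ u in Ioi (0:ℝ), b u := by
    refine le_of_tendsto_of_tendsto hL (tendsto_const_nhds.add hGlim) ?_
    filter_upwards [eventually_ge_atTop (0:ℝ)] with t ht using hφG t ht
  -- evaluate the integral
  have hval : ∫ u in Ioi (0:ℝ), b u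
      = -(3 * σ * N / a₀ ^ 3) * (Real.exp (x^2) * (s⁻¹ * ∫ u in Ioi x, Real.exp (-u^2))) := by
    rw [hb_def]
    rw [integral_const_mul, my_gauss α s hs, hx]
  rw [hval] at hLle
  refine hLle.trans (le_of_eq ?_)
  have hπ : (0:ℝ) < Real.sqrt Real.pi := Real.sqrt_pos.mpr Real.pi_pos
  have hππ : Real.sqrt Real.pi * Real.sqrt Real.pi = Real.pi := Real.mul_self_sqrt Real.pi_pos.le
  have hsq2 : Real.sqrt (Real.pi / 2) = Real.sqrt Real.pi / Real.sqrt 2 := by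
    rw [Real.sqrt_div Real.pi_pos.le]
  rw [Erfc, hsq2]
  have hJ : (∫ u in Ioi x, Real.exp (-u^2)) = ∫ u in Ioi x, Real.exp (-u^2) := rfl
  have hx2 : x ^ 2 = x^2 := rfl
  rw [sub_eq_add_neg]
  congr 1
  rw [hs_def]
  field_simp
  ring
end
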